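/- There exist absolute constants n₀ and d₀ such that the following holds for all integers n ≥ n₀ and d ≥ d₀. Let r > 0 and let x, x₁, …, xₙ ∈ ℝ^d satisfy ‖xᵢ − x‖₂ ≤ r for all i ∈ [n]. Let Bᵢ denote the closed Euclidean ball of radius r√d centered at xᵢ, and let V_B denote the Lebesgue volume of a ball of radius r√d in ℝ^d. Then the Lebesgue volume of ⋂ᵢ₌₁ⁿ Bᵢ is at least (1/2)·e^{−10√(log n)}·V_B. -/

import Mathlib

open MeasureTheory Metric
set_option maxHeartbeats 1000000

lemma aux_exp_lb {t : ℝ} (h0 : 0 ≤ t) (h1 : t ≤ 1/2) : Real.exp (-(2*t)) ≤ 1 - t := by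
  have h := Real.add_one_le_exp (2*t)
  have hp := Real.exp_pos (2*t)
  have hq := Real.exp_pos (-(2*t))
  have hmul : Real.exp (-(2*t)) * Real.exp (2*t) = 1 := by
    rw [← Real.exp_add]; simp
  nlinarith [hmul, h, hp, hq]

lemma aux_unsq {a b : ℝ} (hb : 0 ≤ b) (h : a^2 ≤ b^2) : a ≤ b := by nlinarith

theorem stmt_0 :
    ∃ n₀ d₀ : ℕ, ∀ (n d : ℕ), n₀ ≤ n → d₀ ≤ d →
      ∀ r : ℝ, 0 < r →
      ∀ (x : EuclideanSpace ℝ (Fin d)) (xs : Fin n → EuclideanSpace ℝ (Fin d)),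
        (∀ i, ‖xs i - x‖ ≤ r) →
        ENNReal.ofReal ((1 / 2) * Real.exp (-10 * Real.sqrt (Real.log n))) *
            volume (closedBall (0 : EuclideanSpace ℝ (Fin d)) (r * Real.sqrt d)) ≤
          volume (⋂ i, closedBall (xs i) (r * Real.sqrt d)) := by
  refine ⟨16, 16, ?_⟩
  intro n d hn hd r hr x xs hxs
  have hd1 : 1 ≤ d := le_trans (by norm_num) hd
  have hdR : (16:ℝ) ≤ (d:ℝ) := by exact_mod_cast hd
  have hnR : (16:ℝ) ≤ (n:ℝ) := by exact_mod_cast hn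
  have hdpos : (0:ℝ) < d := by linarith
  set s : ℝ := Real.sqrt (Real.log n) with hs_def
  have hs0 : 0 ≤ s := Real.sqrt_nonneg _
  have hlogn : 1 ≤ Real.log n := by
    rw [Real.le_log_iff_exp_le (by linarith)]
    calc Real.exp 1 ≤ 2.7182818286 := (Real.exp_one_lt_d9).le
      _ ≤ (n:ℝ) := by linarith
  have hs1 : 1 ≤ s := by
    rw [hs_def, show (1:ℝ) = Real.sqrt 1 by simp]
    exact Real.sqrt_le_sqrt hlogn
  set q : ℝ := Real.sqrt d with hq_def
  have hq4 : (4:ℝ) ≤ q := by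
    rw [hq_def, show (4:ℝ) = Real.sqrt 16 by
      rw [show (16:ℝ) = 4^2 by norm_num, Real.sqrt_sq]; norm_num]
    exact Real.sqrt_le_sqrt hdR
  have hq2 : q^2 = (d:ℝ) := Real.sq_sqrt hdpos.le
  set R : ℝ := r * q with hR_def
  have hRpos : 0 < R := by positivity
  have hR2 : R^2 = r^2 * d := by rw [hR_def, mul_pow, hq2]
  set V := volume (ball (0 : EuclideanSpace ℝ (Fin d)) 1) with hV
  have hvol : ∀ (y : EuclideanSpace ℝ (Fin d)) (ρ : ℝ), 0 ≤ ρ →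
      volume (closedBall y ρ) = ENNReal.ofReal (ρ^d) * V := by
    intro y ρ hρ
    rw [hV, Measure.addHaar_closedBall _ _ hρ, finrank_euclideanSpace_fin]
  rw [hvol 0 R hRpos.le]
  set c : ℝ := (1/2) * Real.exp (-10 * s) with hc_def
  have hc0 : 0 ≤ c := by positivity
  have hs2 : s^2 = Real.log n := Real.sq_sqrt (by linarith)
  have hVfin : V ≠ ⊤ := measure_ball_lt_top.ne
  by_cases hcase : 12*s + 2 ≤ (d:ℝ)
  ·
    set M : ℝ := 3*r*s with hM_def
    have hM0 : 0 < M := by positivity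
    set P : ℝ := R^2 - r^2 - 2*r*M with hP_def
    have hPeq : P = r^2 * ((d:ℝ) - 1 - 6*s) := by rw [hP_def, hR2, hM_def]; ring
    have hd6s : 1 + 6*s ≤ (d:ℝ) - 1 - 6*s := by linarith
    have hPpos : 0 < P := by
      rw [hPeq]
      apply mul_pos (by positivity)
      linarith
    set ρ : ℝ := Real.sqrt P with hρ_def
    have hρ2 : ρ^2 = P := Real.sq_sqrt hPpos.le
    have hρ0 : 0 ≤ ρ := Real.sqrt_nonneg _
    set σ : ℝ := Real.sqrt (P - M^2) with hσ_def
    have hσ0 : 0 ≤ σ := Real.sqrt_nonneg _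
    -- bad caps
    set bad : Fin n → Set (EuclideanSpace ℝ (Fin d)) :=
      fun i => {p | ‖p - x‖ ≤ ρ ∧ r*M ≤ (inner ℝ (p - x) (x - xs i) : ℝ)} with hbad_def
    set cen : Fin n → EuclideanSpace ℝ (Fin d) :=
      fun i => x + (M / ‖x - xs i‖) • (x - xs i) with hcen_def
    -- каждая шапка лежит в маленьком шаре
    have hbad_sub : ∀ i, bad i ⊆ closedBall (cen i) σ := by
      intro i p hp
      obtain ⟨h1, h2⟩ := hp
      set v := x - xs i with hv_def
      have hv0 : v ≠ 0 := by
        intro hv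
        rw [hv, inner_zero_right] at h2
        have : 0 < r * M := mul_pos hr hM0
        linarith
      have hvn : 0 < ‖v‖ := norm_pos_iff.2 hv0
      have hvr : ‖v‖ ≤ r := by rw [hv_def, norm_sub_rev]; exact hxs i
      have hinner : M * ‖v‖ ≤ (inner ℝ (p - x) v : ℝ) := by
        refine le_trans ?_ h2
        calc M * ‖v‖ ≤ M * r := mul_le_mul_of_nonneg_left hvr hM0.le
          _ = r * M := mul_comm _ _
      have hdiff : p - cen i = (p - x) - (M / ‖v‖) • v := by
        rw [hcen_def]; simp only []; rw [← hv_def]; abel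
      have hnorm_smul : ‖(M / ‖v‖) • v‖ = M := by
        rw [norm_smul, Real.norm_eq_abs, abs_of_nonneg (by positivity),
          div_mul_cancel₀ _ hvn.ne']
      have hexp : ‖p - cen i‖^2 = ‖p - x‖^2 - 2*((M/‖v‖)*(inner ℝ (p - x) v : ℝ)) + M^2 := by
        rw [hdiff, norm_sub_sq_real, real_inner_smul_right, hnorm_smul]
      have hsq1 : ‖p - x‖^2 ≤ P := by
        have := pow_le_pow_left₀ (norm_nonneg (p - x)) h1 2
        rwa [hρ2] at this
      have hle : ‖p - cen i‖^2 ≤ P - M^2 := by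
        have hkey : M^2 ≤ (M/‖v‖) * (inner ℝ (p - x) v : ℝ) := by
          have h3 : (M/‖v‖) * (M * ‖v‖) ≤ (M/‖v‖) * (inner ℝ (p - x) v : ℝ) :=
            mul_le_mul_of_nonneg_left hinner (by positivity)
          calc M^2 = (M/‖v‖) * (M * ‖v‖) := by field_simp
            _ ≤ _ := h3
        linarith [hexp, hsq1, hkey]
      rw [mem_closedBall, dist_eq_norm, hσ_def]
      calc ‖p - cen i‖ = Real.sqrt (‖p - cen i‖^2) := (Real.sqrt_sq (norm_nonneg _)).symm
        _ ≤ Real.sqrt (P - M^2) := Real.sqrt_le_sqrt hle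
    -- the good set is in the intersection
    have hG : closedBall x ρ \ (⋃ i, bad i) ⊆ ⋂ i, closedBall (xs i) R := by
      intro p hp
      obtain ⟨hp1, hp2⟩ := hp
      refine Set.mem_iInter.2 fun i => ?_
      have h1 : ‖p - x‖ ≤ ρ := by
        rw [mem_closedBall, dist_eq_norm] at hp1; exact hp1
      have h2 : (inner ℝ (p - x) (x - xs i) : ℝ) < r*M := by
        by_contra h
        exact hp2 (Set.mem_iUnion.2 ⟨i, h1, not_lt.1 h⟩)
      have hxr : ‖x - xs i‖ ≤ r := by rw [norm_sub_rev]; exact hxs i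
      have hexp : ‖p - xs i‖^2 = ‖p - x‖^2 + 2*(inner ℝ (p - x) (x - xs i) : ℝ) + ‖x - xs i‖^2 := by
        have h3 : p - xs i = (p - x) + (x - xs i) := by abel
        rw [h3, norm_add_sq_real]
      have hsq1 : ‖p - x‖^2 ≤ P := by
        have := pow_le_pow_left₀ (norm_nonneg (p - x)) h1 2
        rwa [hρ2] at this
      have hnorm : ‖p - xs i‖^2 ≤ R^2 := by
        have h4 : ‖x - xs i‖^2 ≤ r^2 := by
          have := pow_le_pow_left₀ (norm_nonneg (x - xs i)) hxr 2
          exact this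
        rw [hexp]
        rw [hP_def] at hsq1
        linarith
      rw [mem_closedBall, dist_eq_norm]
      exact aux_unsq hRpos.le hnorm
    -- volume of union of caps
    have hU : volume (⋃ i, bad i) ≤ ENNReal.ofReal (n * σ^d) * V := by
      calc volume (⋃ i, bad i) ≤ ∑ i : Fin n, volume (bad i) :=
            measure_iUnion_fintype_le _ _
        _ ≤ ∑ _i : Fin n, ENNReal.ofReal (σ^d) * V := by
            refine Finset.sum_le_sum fun i _ => ?_
            rw [← hvol (cen i) σ hσ0]
            exact measure_mono (hbad_sub i)
        _ = (n : ENNReal) * (ENNReal.ofReal (σ^d) * V) := by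
            rw [Finset.sum_const, Finset.card_univ, Fintype.card_fin, nsmul_eq_mul]
        _ = ENNReal.ofReal (n * σ^d) * V := by
            rw [ENNReal.ofReal_mul (by positivity), ENNReal.ofReal_natCast, mul_assoc]
    have hUfin : volume (⋃ i, bad i) ≠ ⊤ := by
      refine ne_top_of_le_ne_top ?_ hU
      exact ENNReal.mul_ne_top ENNReal.ofReal_ne_top hVfin
    -- key real inequality
    have hA : Real.exp (-10*s) * R^d ≤ ρ^d := by
      apply aux_unsq (by positivity)
      have e1 : (Real.exp (-10*s) * R^d)^2 = Real.exp (-(20*s)) * (R^2)^d := by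
        have h1 : Real.exp (-10*s) ^ 2 = Real.exp (-(20*s)) := by
          rw [sq, ← Real.exp_add]
          congr 1
          ring
        rw [mul_pow, h1, ← pow_mul, mul_comm d 2, pow_mul]
      have e2 : (ρ^d)^2 = P^d := by rw [← pow_mul, mul_comm, pow_mul, hρ2]
      rw [e1, e2]
      -- exp(-20s) * (r² d)^d ≤ (r²(d-1-6s))^d
      set t : ℝ := (1 + 6*s)/d with ht_def
      have ht0 : 0 ≤ t := by positivity
      have ht12 : t ≤ 1/2 := by
        rw [ht_def, div_le_div_iff₀ hdpos (by norm_num)]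
        linarith
      have hst := aux_exp_lb ht0 ht12
      have hstep : (d:ℝ) * Real.exp (-(2*t)) ≤ (d:ℝ) - 1 - 6*s := by
        have := mul_le_mul_of_nonneg_left hst hdpos.le
        have hd0 : (d:ℝ) ≠ 0 := hdpos.ne'
        calc (d:ℝ) * Real.exp (-(2*t)) ≤ (d:ℝ) * (1 - t) := this
          _ = (d:ℝ) - 1 - 6*s := by rw [ht_def]; field_simp; ring
      have hpow : ((d:ℝ) * Real.exp (-(2*t)))^d ≤ ((d:ℝ) - 1 - 6*s)^d :=
        pow_le_pow_left₀ (by positivity) hstep d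
      have hexp_pow : (Real.exp (-(2*t)))^d = Real.exp (-(2*(1+6*s))) := by
        rw [← Real.exp_nat_mul]
        congr 1
        rw [ht_def]
        have hd0 : (d:ℝ) ≠ 0 := hdpos.ne'
        field_simp
      have h20 : Real.exp (-(20*s)) ≤ Real.exp (-(2*(1+6*s))) :=
        Real.exp_le_exp.2 (by linarith)
      calc Real.exp (-(20*s)) * (R^2)^d = Real.exp (-(20*s)) * ((r^2)^d * (d:ℝ)^d) := by
            rw [hR2, mul_pow]
        _ ≤ Real.exp (-(2*(1+6*s))) * ((r^2)^d * (d:ℝ)^d) := by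
            apply mul_le_mul_of_nonneg_right h20 (by positivity)
        _ = (r^2)^d * ((d:ℝ)^d * (Real.exp (-(2*t)))^d) := by rw [hexp_pow]; ring
        _ = (r^2)^d * ((d:ℝ) * Real.exp (-(2*t)))^d := by rw [mul_pow]
        _ ≤ (r^2)^d * ((d:ℝ) - 1 - 6*s)^d := by
            apply mul_le_mul_of_nonneg_left hpow (by positivity)
        _ = P^d := by rw [hPeq, mul_pow]
    have hB : (n:ℝ) * σ^d ≤ ρ^d / 2 := by
      by_cases hPM : P - M^2 ≤ 0
      · have : σ = 0 := Real.sqrt_eq_zero'.2 hPM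
        rw [this, zero_pow (by omega), mul_zero]
        positivity
      · push_neg at hPM
        apply aux_unsq (by positivity)
        have e2 : (ρ^d)^2 = P^d := by rw [← pow_mul, mul_comm, pow_mul, hρ2]
        have e3 : ((n:ℝ) * σ^d)^2 = (n:ℝ)^2 * (P - M^2)^d := by
          rw [mul_pow, ← pow_mul, mul_comm d 2, pow_mul, Real.sq_sqrt hPM.le]
        have e4 : (ρ^d/2)^2 = P^d/4 := by rw [div_pow, e2]; norm_num
        rw [e3, e4]
        -- n² (P - M²)^d ≤ P^d / 4
        set u : ℝ := M^2 / P with hu_def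
        have hu0 : 0 < u := by positivity
        have hu1 : u < 1 := by
          rw [hu_def, div_lt_one hPpos]; linarith
        have hPM_le : P - M^2 ≤ P * Real.exp (-u) := by
          have h1u : 1 - u ≤ Real.exp (-u) := by
            have := Real.add_one_le_exp (-u); linarith
          have : P * (1 - u) ≤ P * Real.exp (-u) :=
            mul_le_mul_of_nonneg_left h1u hPpos.le
          calc P - M^2 = P * (1 - u) := by rw [hu_def]; field_simp
            _ ≤ _ := this
        have hpow : (P - M^2)^d ≤ (P * Real.exp (-u))^d :=
          pow_le_pow_left₀ (by linarith) hPM_le d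
        have hexp_pow : (Real.exp (-u))^d = Real.exp (-(u*d)) := by
          rw [← Real.exp_nat_mul]; congr 1; ring
        have hu_mul : u * P = M^2 := by
          rw [hu_def]; field_simp
        have hud : 9 * Real.log n ≤ u * d := by
          have hPle : P ≤ r^2 * (d:ℝ) := by
            rw [hPeq]
            apply mul_le_mul_of_nonneg_left _ (sq_nonneg r)
            linarith
          have hM2 : M^2 = 9*r^2*s^2 := by rw [hM_def]; ring
          have h2 : (u * (d:ℝ)) * P = 9*s^2*(r^2*(d:ℝ)) := by
            calc (u * (d:ℝ)) * P = (u*P) * (d:ℝ) := by ring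
              _ = (9*r^2*s^2) * (d:ℝ) := by rw [hu_mul, hM2]
              _ = 9*s^2*(r^2*(d:ℝ)) := by ring
          have h1 : 9*s^2*P ≤ 9*s^2*(r^2*(d:ℝ)) :=
            mul_le_mul_of_nonneg_left hPle (by positivity)
          have h3 : 9*s^2*P ≤ (u * (d:ℝ)) * P := by rw [h2]; exact h1
          have h4 : 9*s^2 ≤ u * (d:ℝ) := le_of_mul_le_mul_right h3 hPpos
          rw [← hs2]; exact h4
        have hexp_le : Real.exp (-(u*d)) ≤ ((n:ℝ)^9)⁻¹ := by
          have h1 : Real.exp (-(u*d)) ≤ Real.exp (-(9 * Real.log n)) :=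
            Real.exp_le_exp.2 (by linarith)
          have h2 : Real.exp (-(9 * Real.log n)) = ((n:ℝ)^9)⁻¹ := by
            rw [Real.exp_neg]
            congr 1
            rw [show (9:ℝ) * Real.log n = ((9:ℕ):ℝ) * Real.log n by norm_num,
              Real.exp_nat_mul, Real.exp_log (by linarith)]
          rw [h2] at h1; exact h1
        have hn2 : (n:ℝ)^2 * ((n:ℝ)^9)⁻¹ ≤ 1/4 := by
          have hnpos : (0:ℝ) < n := by linarith
          rw [show ((n:ℝ)^9) = (n:ℝ)^2 * (n:ℝ)^7 by ring, mul_inv]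
          have h7 : (4:ℝ) ≤ (n:ℝ)^7 := by
            calc (4:ℝ) ≤ 16^7 := by norm_num
              _ ≤ (n:ℝ)^7 := pow_le_pow_left₀ (by norm_num) hnR 7
          have h7' : ((n:ℝ)^7)⁻¹ ≤ 1/4 := by
            rw [show (1:ℝ)/4 = (4:ℝ)⁻¹ by norm_num]
            exact inv_anti₀ (by norm_num) h7
          calc (n:ℝ)^2 * (((n:ℝ)^2)⁻¹ * ((n:ℝ)^7)⁻¹) = ((n:ℝ)^7)⁻¹ := by
                field_simp
            _ ≤ 1/4 := h7'
        calc (n:ℝ)^2 * (P - M^2)^d ≤ (n:ℝ)^2 * (P^d * Real.exp (-(u*d))) := by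
              apply mul_le_mul_of_nonneg_left _ (by positivity)
              calc (P - M^2)^d ≤ (P * Real.exp (-u))^d := hpow
                _ = P^d * Real.exp (-(u*d)) := by rw [mul_pow, hexp_pow]
          _ ≤ (n:ℝ)^2 * (P^d * ((n:ℝ)^9)⁻¹) := by
              apply mul_le_mul_of_nonneg_left _ (by positivity)
              exact mul_le_mul_of_nonneg_left hexp_le (by positivity)
          _ = P^d * ((n:ℝ)^2 * ((n:ℝ)^9)⁻¹) := by ring
          _ ≤ P^d * (1/4) := mul_le_mul_of_nonneg_left hn2 (by positivity)
          _ = P^d / 4 := by ring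
    have hkey : c * R^d + (n:ℝ) * σ^d ≤ ρ^d := by
      rw [hc_def]
      linarith [hA, hB]
    -- assemble
    have main : ENNReal.ofReal c * (ENNReal.ofReal (R^d) * V) + volume (⋃ i, bad i) ≤
        volume (closedBall x ρ \ ⋃ i, bad i) + volume (⋃ i, bad i) := by
      calc ENNReal.ofReal c * (ENNReal.ofReal (R^d) * V) + volume (⋃ i, bad i)
          ≤ ENNReal.ofReal (c * R^d) * V + ENNReal.ofReal ((n:ℝ) * σ^d) * V := by
            apply add_le_add _ hU
            rw [← mul_assoc, ← ENNReal.ofReal_mul hc0]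
        _ = ENNReal.ofReal (c * R^d + (n:ℝ) * σ^d) * V := by
            rw [← add_mul, ← ENNReal.ofReal_add (by positivity) (by positivity)]
        _ ≤ ENNReal.ofReal (ρ^d) * V :=
            mul_le_mul_left (ENNReal.ofReal_le_ofReal hkey) V
        _ = volume (closedBall x ρ) := (hvol x ρ hρ0).symm
        _ ≤ volume ((closedBall x ρ \ ⋃ i, bad i) ∪ ⋃ i, bad i) := by
            apply measure_mono
            rw [Set.diff_union_self]
            exact Set.subset_union_left
        _ ≤ _ := measure_union_le _ _
    have hfinal := (ENNReal.add_le_add_iff_right hUfin).1 main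
    exact hfinal.trans (measure_mono hG)
  · -- trivial case: d < 12 s + 2
    push_neg at hcase
    have hRr : 0 ≤ R - r := by nlinarith
    have hsub : closedBall x (R - r) ⊆ ⋂ i, closedBall (xs i) R := by
      refine Set.subset_iInter fun i => fun p hp => ?_
      rw [mem_closedBall] at *
      have h2 : dist x (xs i) ≤ r := by
        rw [dist_comm, dist_eq_norm]; exact hxs i
      have := dist_triangle p x (xs i)
      linarith
    have hreal : c * R^d ≤ (R - r)^d := by
      -- q - 1 ≥ q exp(-2/q)
      have ht : (1:ℝ)/q ≤ 1/2 := by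
        rw [div_le_div_iff₀ (by linarith) (by norm_num)]; linarith
      have h0 : (0:ℝ) ≤ 1/q := by positivity
      have hst := aux_exp_lb h0 ht
      have hstep : q * Real.exp (-(2*(1/q))) ≤ q - 1 := by
        have := mul_le_mul_of_nonneg_left hst (by linarith : (0:ℝ) ≤ q)
        have hq0 : q ≠ 0 := by linarith
        calc q * Real.exp (-(2*(1/q))) ≤ q * (1 - 1/q) := this
          _ = q - 1 := by field_simp
      -- (R-r)^d = r^d (q-1)^d ≥ r^d q^d exp(-2q)
      have hpow : (q * Real.exp (-(2*(1/q))))^d ≤ (q-1)^d :=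
        pow_le_pow_left₀ (by positivity) hstep d
      have hexp_pow : (Real.exp (-(2*(1/q))))^d = Real.exp (-(2*q)) := by
        rw [← Real.exp_nat_mul]
        congr 1
        have hq0 : q ≠ 0 := by linarith
        field_simp
        rw [← hq2]
      have h1 : q^d * Real.exp (-(2*q)) ≤ (q-1)^d := by
        calc q^d * Real.exp (-(2*q)) = (q * Real.exp (-(2*(1/q))))^d := by
              rw [mul_pow, hexp_pow]
          _ ≤ (q-1)^d := hpow
      -- c ≤ exp(-2q)
      have h2 : c ≤ Real.exp (-(2*q)) := by
        rw [hc_def]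
        have : Real.exp (-10*s) ≤ Real.exp (-(2*q)) := by
          apply Real.exp_le_exp.2
          -- need 2q ≤ 10 s, from d < 12s+2 i.e. q² < 12 s + 2, q ≥ 4
          nlinarith [hq2, hcase, hq4, hs0]
        nlinarith [Real.exp_pos (-10*s), this]
      calc c * R^d = c * (r^d * q^d) := by rw [hR_def, mul_pow]
        _ ≤ Real.exp (-(2*q)) * (r^d * q^d) := by
            apply mul_le_mul_of_nonneg_right h2 (by positivity)
        _ = r^d * (q^d * Real.exp (-(2*q))) := by ring
        _ ≤ r^d * (q-1)^d := by
            apply mul_le_mul_of_nonneg_left h1 (by positivity)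
        _ = (R - r)^d := by
            rw [show R - r = r * (q - 1) by rw [hR_def]; ring, mul_pow]
    calc ENNReal.ofReal c * (ENNReal.ofReal (R^d) * V)
        = ENNReal.ofReal (c * R^d) * V := by
          rw [← mul_assoc, ← ENNReal.ofReal_mul hc0]
      _ ≤ ENNReal.ofReal ((R-r)^d) * V :=
          mul_le_mul_left (ENNReal.ofReal_le_ofReal hreal) V
      _ = volume (closedBall x (R - r)) := (hvol x _ hRr).symm
      _ ≤ volume (⋂ i, closedBall (xs i) R) := measure_mono hsub
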